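/- Let M' ≤ M and let δ₁, δ₂ : Matrix (Fin M) (Fin M) (ZMod 2) satisfy δₐ·δₐ = 0 for a = 1, 2. Assume that for a = 1, 2: every v ∈ ker δₐ not in the column space of δₐ has wt(v) ≥ M − M' + 1, and every v ∈ ker δₐᵀ not in the column space of δₐᵀ has wt(v) ≥ M − M' + 1. If h : Matrix (Fin M) (Fin M) (ZMod 2) satisfies δ₁·h + h·δ₂ᵀ = 0 and h i j = 0 for all i, j with i < M' and j < M' (i.e., the reduced matrix of h vanishes), then h = δ₁·φ + φ·δ₂ᵀ for some M×M matrix φ. -/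

import Mathlib

open Matrix

/-- The weight of a vector over `ZMod 2`: its number of nonzero entries. -/
def wt {n : ℕ} (v : Fin n → ZMod 2) : ℕ :=
  (Finset.univ.filter fun i => v i ≠ 0).card

section Aux
variable {F : Type*} [Field F]

/-- membership via double-orthogonality w.r.t. a pairing surjecting onto the dual -/
lemma mem_of_pairing {V : Type*} [AddCommGroup V] [Module F V]
    (B : V →ₗ[F] Module.Dual F V) (hB : Function.Surjective B)
    (U : Submodule F V) (v : V)
    (hv : ∀ w : V, (∀ u ∈ U, B w u = 0) → B w v = 0) : v ∈ U := by
  rw [← Subspace.forall_mem_dualAnnihilator_apply_eq_zero_iff U v]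
  intro φ hφ
  obtain ⟨w, rfl⟩ := hB φ
  exact hv w fun u hu => (Submodule.mem_dualAnnihilator _).1 hφ u hu

lemma surj_of_inj {V : Type*} [AddCommGroup V] [Module F V] [FiniteDimensional F V]
    (B : V →ₗ[F] Module.Dual F V) (hB : Function.Injective B) : Function.Surjective B := by
  rw [← LinearMap.range_eq_top]
  apply Submodule.eq_top_of_finrank_eq
  rw [LinearMap.finrank_range_of_inj hB, Subspace.dual_finrank_eq]

/-- dot-product pairing on `ι → F` -/
def dotB (ι : Type*) [Fintype ι] : (ι → F) →ₗ[F] Module.Dual F (ι → F) :=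
  LinearMap.mk₂ F (fun w v => ∑ i, w i * v i)
    (fun w w' v => by simp [add_mul, Finset.sum_add_distrib])
    (fun c w v => by simp [Finset.mul_sum, mul_assoc])
    (fun w v v' => by simp [mul_add, Finset.sum_add_distrib])
    (fun c w v => by simp [Finset.mul_sum, mul_left_comm _ c])

lemma dotB_apply {ι : Type*} [Fintype ι] (w v : ι → F) : dotB ι w v = ∑ i, w i * v i := rfl

lemma dotB_inj (ι : Type*) [Fintype ι] [DecidableEq ι] :
    Function.Injective (dotB (F := F) ι) := by
  intro w w' h
  funext i
  have := congrFun (congrArg DFunLike.coe h) (Pi.single i 1)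
  simpa [dotB_apply, Pi.single_apply, mul_ite, Finset.sum_ite_eq'] using this

lemma mem_of_forall_dot {ι : Type*} [Fintype ι] [DecidableEq ι]
    (U : Submodule F (ι → F)) (v : ι → F)
    (hv : ∀ w : ι → F, (∀ u ∈ U, ∑ i, w i * u i = 0) → ∑ i, w i * v i = 0) : v ∈ U :=
  mem_of_pairing (dotB ι) (surj_of_inj _ (dotB_inj ι)) U v hv

/-- trace pairing on matrices -/
def matB (m n : Type*) [Fintype m] [Fintype n] :
    Matrix m n F →ₗ[F] Module.Dual F (Matrix m n F) :=
  LinearMap.mk₂ F (fun w v => ∑ i, ∑ j, w i j * v i j)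
    (fun w w' v => by simp [Matrix.add_apply, add_mul, Finset.sum_add_distrib])
    (fun c w v => by simp [Matrix.smul_apply, Finset.mul_sum, mul_assoc, smul_eq_mul])
    (fun w v v' => by simp [Matrix.add_apply, mul_add, Finset.sum_add_distrib])
    (fun c w v => by simp [Matrix.smul_apply, Finset.mul_sum, mul_left_comm _ c, smul_eq_mul])

lemma matB_apply {m n : Type*} [Fintype m] [Fintype n] (w v : Matrix m n F) :
    matB m n w v = ∑ i, ∑ j, w i j * v i j := rfl

lemma matB_inj (m n : Type*) [Fintype m] [Fintype n] [DecidableEq m] [DecidableEq n] :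
    Function.Injective (matB (F := F) m n) := by
  intro w w' h
  ext i j
  have := congrFun (congrArg DFunLike.coe h) (Matrix.single i j 1)
  simpa [matB_apply, Matrix.single, Matrix.of_apply, ite_and, mul_ite,
    Finset.sum_ite_eq', Finset.sum_ite_eq] using this

lemma mem_of_forall_matB {m n : Type*} [Fintype m] [Fintype n] [DecidableEq m] [DecidableEq n]
    (U : Submodule F (Matrix m n F)) (v : Matrix m n F)
    (hv : ∀ w : Matrix m n F, (∀ u ∈ U, ∑ i, ∑ j, w i j * u i j = 0) →
      ∑ i, ∑ j, w i j * v i j = 0) : v ∈ U :=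
  mem_of_pairing (matB m n) (surj_of_inj _ (matB_inj m n)) U v hv

/-- a linear projection onto a submodule -/
lemma exists_proj {V : Type*} [AddCommGroup V] [Module F V] (U : Submodule F V) :
    ∃ p : V →ₗ[F] V, (∀ v, p v ∈ U) ∧ (∀ u ∈ U, p u = u) := by
  obtain ⟨q, hq⟩ := Submodule.exists_isCompl U
  refine ⟨U.subtype ∘ₗ U.projectionOnto q hq, fun v => (U.projectionOnto q hq v).2,
    fun u hu => ?_⟩
  have := Submodule.linearProjOfIsCompl_apply_left hq ⟨u, hu⟩
  simp [this]

/-- generalized inverse of a square matrix -/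
lemma exists_geninv {n : Type*} [Fintype n] [DecidableEq n] (A : Matrix n n F) :
    ∃ s : Matrix n n F, A * s * A = A := by
  set f := Matrix.mulVecLin A with hf
  obtain ⟨q, hq⟩ := Submodule.exists_isCompl (LinearMap.range f)
  obtain ⟨g, hg⟩ := f.rangeRestrict.exists_rightInverse_of_surjective
    (LinearMap.range_eq_top.2 f.surjective_rangeRestrict)
  set slin := g ∘ₗ (LinearMap.range f).linearProjOfIsCompl q hq with hslin
  refine ⟨LinearMap.toMatrix' slin, ?_⟩
  apply Matrix.toLin'.injective
  refine LinearMap.ext fun v => ?_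
  simp only [Matrix.toLin'_mul, LinearMap.comp_apply, Matrix.toLin'_toMatrix']
  show f (slin (f v)) = f v
  have h1 : (LinearMap.range f).linearProjOfIsCompl q hq (f v) = ⟨f v, ⟨v, rfl⟩⟩ :=
    Submodule.linearProjOfIsCompl_apply_left hq ⟨f v, ⟨v, rfl⟩⟩
  have h2 := congrFun (congrArg DFunLike.coe hg) (⟨f v, ⟨v, rfl⟩⟩ : LinearMap.range f)
  simp only [LinearMap.comp_apply, LinearMap.id_apply] at h2
  have h3 := congrArg Subtype.val h2
  simp only [hslin, LinearMap.comp_apply, h1]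
  exact h3

lemma vec_eq_zero_of_forall_dot {ι : Type*} [Fintype ι] [DecidableEq ι] {u : ι → F}
    (h : ∀ x : ι → F, u ⬝ᵥ x = 0) : u = 0 := by
  funext i
  simpa [dotProduct, Pi.single_apply, mul_ite, Finset.sum_ite_eq'] using h (Pi.single i 1)

def maskB (M M' : ℕ) : (Fin M → ZMod 2) →ₗ[ZMod 2] (Fin M → ZMod 2) where
  toFun v := fun i => if M' ≤ (i : ℕ) then v i else 0
  map_add' u v := by funext i; by_cases h : M' ≤ (i : ℕ) <;> simp [h]
  map_smul' c v := by funext i; by_cases h : M' ≤ (i : ℕ) <;> simp [h]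

lemma card_B (M M' : ℕ) (hM' : M' ≤ M) :
    (Finset.univ.filter fun i : Fin M => M' ≤ (i : ℕ)).card = M - M' := by
  have h1 : (Finset.univ.filter fun i : Fin M => (i : ℕ) < M') =
      Finset.map (Fin.castLEEmb hM') Finset.univ := by
    ext i
    simp only [Finset.mem_filter, Finset.mem_univ, true_and, Finset.mem_map]
    constructor
    · intro h
      refine ⟨⟨(i : ℕ), h⟩, ?_⟩
      ext; simp
    · rintro ⟨j, -, rfl⟩
      simpa using j.2
  have h2 := Finset.card_filter_add_card_filter_not
    (s := (Finset.univ : Finset (Fin M))) (p := fun i : Fin M => (i : ℕ) < M')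
  rw [h1] at h2
  simp only [Finset.card_map, Finset.card_univ, Fintype.card_fin, not_lt] at h2
  omega

lemma wt_maskB_le (M M' : ℕ) (hM' : M' ≤ M) (v : Fin M → ZMod 2) :
    wt (maskB M M' v) ≤ M - M' := by
  rw [← card_B M M' hM']
  apply Finset.card_le_card
  intro i hi
  simp only [Finset.mem_filter, Finset.mem_univ, true_and] at hi ⊢
  by_contra h
  exact hi (by simp [maskB, h])

lemma cleaning (M M' : ℕ) (hM' : M' ≤ M) (δ : Matrix (Fin M) (Fin M) (ZMod 2))
    (hd : ∀ v, δ.mulVec v = 0 → (¬ ∃ x, δ.mulVec x = v) → M - M' + 1 ≤ wt v)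
    (a : Fin M → ZMod 2) (ha : δᵀ.mulVec a = 0) :
    ∃ x, ∀ i : Fin M, M' ≤ (i : ℕ) → a i = δᵀ.mulVec x i := by
  set mk := maskB M M' with hmk
  have swap : ∀ w v : Fin M → ZMod 2, (∑ i, w i * mk v i) = mk w ⬝ᵥ v := by
    intro w v
    simp only [dotProduct]
    refine Finset.sum_congr rfl fun i _ => ?_
    by_cases h : M' ≤ (i : ℕ) <;> simp [hmk, maskB, h]
  have key : mk a ∈ LinearMap.range (mk ∘ₗ Matrix.mulVecLin δᵀ) := by
    apply mem_of_forall_dot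
    intro w hw
    have hker : δ.mulVec (mk w) = 0 := by
      apply vec_eq_zero_of_forall_dot
      intro x
      have h1 : (∑ i, w i * mk (δᵀ.mulVec x) i) = 0 :=
        hw _ ⟨x, by simp only [LinearMap.comp_apply, Matrix.mulVecLin_apply]⟩
      rw [swap] at h1
      calc δ.mulVec (mk w) ⬝ᵥ x = mk w ᵥ* δᵀ ⬝ᵥ x := by rw [Matrix.vecMul_transpose]
        _ = mk w ⬝ᵥ δᵀ.mulVec x := (Matrix.dotProduct_mulVec _ _ _).symm
        _ = 0 := h1
    have hex : ∃ u, δ.mulVec u = mk w := by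
      by_contra hno
      have h1 := hd (mk w) hker hno
      have h2 := wt_maskB_le M M' hM' w
      rw [hmk] at h1
      omega
    obtain ⟨u, hu⟩ := hex
    rw [swap]
    calc mk w ⬝ᵥ a = δ.mulVec u ⬝ᵥ a := by rw [hu]
      _ = a ⬝ᵥ δ.mulVec u := dotProduct_comm _ _
      _ = a ᵥ* δ ⬝ᵥ u := Matrix.dotProduct_mulVec _ _ _
      _ = δᵀ.mulVec a ⬝ᵥ u := by rw [← Matrix.vecMul_transpose, Matrix.transpose_transpose]
      _ = 0 := by rw [ha, zero_dotProduct]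
  obtain ⟨x, hx⟩ := key
  refine ⟨x, fun i hi => ?_⟩
  have h3 := congrFun hx i
  simp only [LinearMap.comp_apply, Matrix.mulVecLin_apply, hmk, maskB,
    LinearMap.coe_mk, AddHom.coe_mk, hi, if_true] at h3
  exact h3.symm

lemma addeq {α : Type*} [AddCommGroup α] (hself : ∀ x : α, x + x = 0) {a b : α}
    (h : a + b = 0) : a = b := by
  calc a = a + (b + b) := by rw [hself b, add_zero]
    _ = (a + b) + b := by rw [add_assoc]
    _ = b := by rw [h, zero_add]

lemma vself {n : ℕ} (x : Fin n → ZMod 2) : x + x = 0 := by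
  funext i; exact CharTwo.add_self_eq_zero _

lemma mself {n : ℕ} (X : Matrix (Fin n) (Fin n) (ZMod 2)) : X + X = 0 := by
  ext i j; exact CharTwo.add_self_eq_zero _

lemma adj1 {n : Type*} [Fintype n] {F : Type*} [CommRing F] (A : Matrix n n F) (v w : n → F) :
    (Aᵀ *ᵥ v) ⬝ᵥ w = v ⬝ᵥ (A *ᵥ w) := by
  rw [dotProduct_comm, Matrix.dotProduct_mulVec, Matrix.vecMul_transpose,
    dotProduct_comm]

lemma key_pair (M M' : ℕ) (hM' : M' ≤ M)
    (δ₁ δ₂ : Matrix (Fin M) (Fin M) (ZMod 2))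
    (h₁ : δ₁ * δ₁ = 0) (h₂ : δ₂ * δ₂ = 0)
    (hZ₁ : ∀ v : Fin M → ZMod 2, δ₁.mulVec v = 0 →
      (¬ ∃ x : Fin M → ZMod 2, δ₁.mulVec x = v) → M - M' + 1 ≤ wt v)
    (hZ₂ : ∀ v : Fin M → ZMod 2, δ₂.mulVec v = 0 →
      (¬ ∃ x : Fin M → ZMod 2, δ₂.mulVec x = v) → M - M' + 1 ≤ wt v)
    (ψ : Matrix (Fin M) (Fin M) (ZMod 2))
    (hcyc : δ₁ * ψ + ψ * δ₂ᵀ = 0)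
    (hred : ∀ i j : Fin M, (i : ℕ) < M' → (j : ℕ) < M' → ψ i j = 0)
    (a b : Fin M → ZMod 2) (ha : δ₁ᵀ.mulVec a = 0) (hb : δ₂ᵀ.mulVec b = 0) :
    a ⬝ᵥ ψ.mulVec b = 0 := by
  have hψ : δ₁ * ψ = ψ * δ₂ᵀ := addeq mself hcyc
  obtain ⟨x, hx⟩ := cleaning M M' hM' δ₁ hZ₁ a ha
  obtain ⟨y, hy⟩ := cleaning M M' hM' δ₂ hZ₂ b hb
  set a' := a + δ₁ᵀ.mulVec x with ha'
  set b' := b + δ₂ᵀ.mulVec y with hb'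
  have haz : ∀ i : Fin M, M' ≤ (i : ℕ) → a' i = 0 := by
    intro i hi
    rw [ha']
    show a i + δ₁ᵀ.mulVec x i = 0
    rw [hx i hi]; exact CharTwo.add_self_eq_zero _
  have hbz : ∀ j : Fin M, M' ≤ (j : ℕ) → b' j = 0 := by
    intro j hj
    rw [hb']
    show b j + δ₂ᵀ.mulVec y j = 0
    rw [hy j hj]; exact CharTwo.add_self_eq_zero _
  have hA : a = a' + δ₁ᵀ.mulVec x := by
    rw [ha', add_assoc, vself, add_zero]
  have hB : b = b' + δ₂ᵀ.mulVec y := by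
    rw [hb', add_assoc, vself, add_zero]
  have hak : δ₁ᵀ.mulVec a' = 0 := by
    rw [ha', Matrix.mulVec_add, ha, Matrix.mulVec_mulVec, ← Matrix.transpose_mul, h₁]
    simp
  have hbk : δ₂ᵀ.mulVec b' = 0 := by
    rw [hb', Matrix.mulVec_add, hb, Matrix.mulVec_mulVec, ← Matrix.transpose_mul, h₂]
    simp
  have t1 : a' ⬝ᵥ ψ.mulVec b' = 0 := by
    simp only [dotProduct, Matrix.mulVec]
    apply Finset.sum_eq_zero
    intro i _
    by_cases hi : M' ≤ (i : ℕ)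
    · rw [haz i hi, zero_mul]
    · have : (∑ j, ψ i j * b' j) = 0 := by
        apply Finset.sum_eq_zero
        intro j _
        by_cases hj : M' ≤ (j : ℕ)
        · rw [hbz j hj, mul_zero]
        · rw [hred i j (not_le.1 hi) (not_le.1 hj), zero_mul]
      rw [this, mul_zero]
  have t2 : a' ⬝ᵥ ψ.mulVec (δ₂ᵀ.mulVec y) = 0 := by
    rw [Matrix.mulVec_mulVec, ← hψ, ← Matrix.mulVec_mulVec, Matrix.dotProduct_mulVec,
      ← Matrix.transpose_transpose δ₁, Matrix.vecMul_transpose, hak, zero_dotProduct]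
  have t3gen : ∀ w : Fin M → ZMod 2, δ₂ᵀ.mulVec w = 0 →
      (δ₁ᵀ.mulVec x) ⬝ᵥ ψ.mulVec w = 0 := by
    intro w hw
    rw [adj1, Matrix.mulVec_mulVec, hψ, ← Matrix.mulVec_mulVec, hw, Matrix.mulVec_zero,
      dotProduct_zero]
  have t3 : (δ₁ᵀ.mulVec x) ⬝ᵥ ψ.mulVec b' = 0 := t3gen b' hbk
  have t4 : (δ₁ᵀ.mulVec x) ⬝ᵥ ψ.mulVec (δ₂ᵀ.mulVec y) = 0 := by
    refine t3gen _ ?_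
    rw [Matrix.mulVec_mulVec, ← Matrix.transpose_mul, h₂]
    simp
  rw [hA, hB]
  simp only [Matrix.mulVec_add, dotProduct_add, add_dotProduct]
  rw [t1, t2, t3, t4]
  simp

lemma T_eq {n : Type*} [Fintype n] {F : Type*} [CommRing F] (χ ψ : Matrix n n F) :
    Matrix.trace (χᵀ * ψ) = ∑ i, ∑ j, χ i j * ψ i j := by
  simp only [Matrix.trace, Matrix.diag, Matrix.mul_apply, Matrix.transpose_apply]
  rw [Finset.sum_comm]

lemma mat_eq_zero_of_forall_pair {n : Type*} [Fintype n] [DecidableEq n] {F : Type*} [CommRing F]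
    {Y : Matrix n n F} (h : ∀ φ : Matrix n n F, ∑ i, ∑ j, Y i j * φ i j = 0) : Y = 0 := by
  ext i j
  have := h (Matrix.single i j 1)
  simpa [Matrix.single, Matrix.of_apply, ite_and, mul_ite,
    Finset.sum_ite_eq', Finset.sum_ite_eq] using this

lemma TL {n : Type*} [Fintype n] {F : Type*} [CommRing F] (A X ψ : Matrix n n F) :
    Matrix.trace ((A * X)ᵀ * ψ) = Matrix.trace (Xᵀ * (Aᵀ * ψ)) := by
  rw [Matrix.transpose_mul, mul_assoc]

lemma TR {n : Type*} [Fintype n] {F : Type*} [CommRing F] (X B ψ : Matrix n n F) :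
    Matrix.trace ((X * B)ᵀ * ψ) = Matrix.trace (Xᵀ * (ψ * Bᵀ)) := by
  rw [Matrix.transpose_mul, Matrix.trace_mul_cycle, ← mul_assoc, Matrix.trace_mul_comm,
    mul_assoc]

theorem main_thm (M M' : ℕ) (hM' : M' ≤ M)
    (δ₁ δ₂ : Matrix (Fin M) (Fin M) (ZMod 2))
    (h₁ : δ₁ * δ₁ = 0) (h₂ : δ₂ * δ₂ = 0)
    (hZ₁ : ∀ v : Fin M → ZMod 2, δ₁.mulVec v = 0 →
      (¬ ∃ x : Fin M → ZMod 2, δ₁.mulVec x = v) → M - M' + 1 ≤ wt v)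
    (hZ₂ : ∀ v : Fin M → ZMod 2, δ₂.mulVec v = 0 →
      (¬ ∃ x : Fin M → ZMod 2, δ₂.mulVec x = v) → M - M' + 1 ≤ wt v) :
    ∀ h : Matrix (Fin M) (Fin M) (ZMod 2), δ₁ * h + h * δ₂ᵀ = 0 →
      (∀ i j : Fin M, (i : ℕ) < M' → (j : ℕ) < M' → h i j = 0) →
      ∃ φ : Matrix (Fin M) (Fin M) (ZMod 2), h = δ₁ * φ + φ * δ₂ᵀ := by
  intro ψ hcyc hred
  classical
  set D : Matrix (Fin M) (Fin M) (ZMod 2) →ₗ[ZMod 2] Matrix (Fin M) (Fin M) (ZMod 2) :=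
    { toFun := fun φ => δ₁ * φ + φ * δ₂ᵀ
      map_add' := fun φ φ' => by rw [Matrix.mul_add, Matrix.add_mul]; abel
      map_smul' := fun c φ => by
        simp only [Matrix.mul_smul, Matrix.smul_mul, smul_add, RingHom.id_apply] } with hD
  suffices hmem : ψ ∈ LinearMap.range D by
    obtain ⟨φ, hφ⟩ := hmem
    exact ⟨φ, by rw [← hφ]; rfl⟩
  apply mem_of_forall_matB
  intro χ hχ
  rw [← T_eq]
  -- χ is a cocycle
  have hcoc : δ₁ᵀ * χ + χ * δ₂ = 0 := by
    apply mat_eq_zero_of_forall_pair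
    intro φ
    rw [← T_eq]
    have hbridge : Matrix.trace ((δ₁ᵀ * χ + χ * δ₂)ᵀ * φ) = Matrix.trace (χᵀ * (D φ)) := by
      show _ = Matrix.trace (χᵀ * (δ₁ * φ + φ * δ₂ᵀ))
      rw [Matrix.transpose_add, Matrix.add_mul, Matrix.trace_add, TL, TR,
        Matrix.transpose_transpose, Matrix.mul_add, Matrix.trace_add]
    rw [hbridge]
    exact (by rw [T_eq]; exact hχ (D φ) ⟨φ, rfl⟩)
  obtain ⟨s₁, hs₁⟩ := exists_geninv δ₁ᵀ
  have hχδ₂ : δ₁ᵀ * χ = χ * δ₂ := addeq mself hcoc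
  set χ₁ := χ + δ₁ᵀ * (s₁ * χ) + (s₁ * χ) * δ₂ with hχ₁
  have e3 : δ₁ᵀ * ((s₁ * χ) * δ₂) = δ₁ᵀ * χ := by
    rw [mul_assoc s₁ χ δ₂, ← hχδ₂, ← mul_assoc s₁, ← mul_assoc, ← mul_assoc, hs₁]
  have k1 : δ₁ᵀ * χ₁ = 0 := by
    rw [hχ₁, Matrix.mul_add, Matrix.mul_add, e3, ← mul_assoc δ₁ᵀ δ₁ᵀ (s₁ * χ),
      ← Matrix.transpose_mul, h₁]
    simp only [Matrix.transpose_zero, Matrix.zero_mul, add_zero]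
    exact mself _
  have k2 : χ₁ * δ₂ = 0 := by
    rw [hχ₁, Matrix.add_mul, Matrix.add_mul, mul_assoc (s₁ * χ) δ₂ δ₂, h₂, mul_zero, add_zero,
      mul_assoc δ₁ᵀ (s₁ * χ) δ₂, e3, ← hχδ₂]
    exact mself _
  have hT1 : Matrix.trace (χ₁ᵀ * ψ) = Matrix.trace (χᵀ * ψ) := by
    calc Matrix.trace (χ₁ᵀ * ψ)
        = (Matrix.trace (χᵀ * ψ) + Matrix.trace ((δ₁ᵀ * (s₁ * χ))ᵀ * ψ))
            + Matrix.trace (((s₁ * χ) * δ₂)ᵀ * ψ) := by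
          rw [hχ₁, Matrix.transpose_add, Matrix.transpose_add, Matrix.add_mul, Matrix.add_mul,
            Matrix.trace_add, Matrix.trace_add]
      _ = Matrix.trace (χᵀ * ψ) + (Matrix.trace ((s₁ * χ)ᵀ * (δ₁ * ψ))
            + Matrix.trace ((s₁ * χ)ᵀ * (ψ * δ₂ᵀ))) := by
          rw [TL δ₁ᵀ (s₁ * χ) ψ, TR (s₁ * χ) δ₂ ψ, Matrix.transpose_transpose, add_assoc]
      _ = Matrix.trace (χᵀ * ψ) := by
          rw [← Matrix.trace_add, ← Matrix.mul_add, hcyc, mul_zero, Matrix.trace_zero, add_zero]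
  rw [← hT1]
  -- projections onto the kernels
  obtain ⟨p₁, hp₁mem, hp₁id⟩ := exists_proj (LinearMap.ker (Matrix.mulVecLin δ₁ᵀ))
  obtain ⟨p₂, hp₂mem, hp₂id⟩ := exists_proj (LinearMap.ker (Matrix.mulVecLin δ₂ᵀ))
  set P₁ := LinearMap.toMatrix' p₁ with hP₁
  set P₂ := LinearMap.toMatrix' p₂ with hP₂
  have hP₁v : ∀ v, P₁.mulVec v = p₁ v := by
    intro v; rw [hP₁, ← Matrix.toLin'_apply, Matrix.toLin'_toMatrix']
  have hP₂v : ∀ v, P₂.mulVec v = p₂ v := by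
    intro v; rw [hP₂, ← Matrix.toLin'_apply, Matrix.toLin'_toMatrix']
  have hP₁ker : ∀ v, δ₁ᵀ.mulVec (P₁.mulVec v) = 0 := by
    intro v; rw [hP₁v]
    exact LinearMap.mem_ker.1 (hp₁mem v)
  have hP₂ker : ∀ v, δ₂ᵀ.mulVec (P₂.mulVec v) = 0 := by
    intro v; rw [hP₂v]
    exact LinearMap.mem_ker.1 (hp₂mem v)
  have hP₁fix : ∀ v, δ₁ᵀ.mulVec v = 0 → P₁.mulVec v = v := by
    intro v hv; rw [hP₁v]
    exact hp₁id v (LinearMap.mem_ker.2 hv)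
  have hP₂fix : ∀ v, δ₂ᵀ.mulVec v = 0 → P₂.mulVec v = v := by
    intro v hv; rw [hP₂v]
    exact hp₂id v (LinearMap.mem_ker.2 hv)
  have h8 : P₁ * χ₁ = χ₁ := by
    ext i j
    have hcol : δ₁ᵀ.mulVec (fun k => χ₁ k j) = 0 := by
      funext i'
      have : (δ₁ᵀ * χ₁) i' j = (0 : Matrix (Fin M) (Fin M) (ZMod 2)) i' j := by rw [k1]
      simpa [Matrix.mulVec, dotProduct, Matrix.mul_apply] using this
    have hfix := congrFun (hP₁fix _ hcol) i
    simpa [Matrix.mul_apply, Matrix.mulVec, dotProduct] using hfix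
  have h9 : χ₁ * P₂ᵀ = χ₁ := by
    ext i j
    have hrow : δ₂ᵀ.mulVec (fun k => χ₁ i k) = 0 := by
      funext j'
      have : (χ₁ * δ₂) i j' = (0 : Matrix (Fin M) (Fin M) (ZMod 2)) i j' := by rw [k2]
      simp only [Matrix.mul_apply, Matrix.zero_apply] at this
      simp only [Matrix.mulVec, dotProduct, Matrix.transpose_apply, Pi.zero_apply]
      rw [← this]
      exact Finset.sum_congr rfl fun k _ => mul_comm _ _
    have hfix := congrFun (hP₂fix _ hrow) j
    simp only [Matrix.mulVec, dotProduct] at hfix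
    simp only [Matrix.mul_apply, Matrix.transpose_apply]
    rw [← hfix]
    exact Finset.sum_congr rfl fun k _ => mul_comm _ _
  have h10 : P₁ᵀ * ψ * P₂ = 0 := by
    ext k l
    have hsingle₁ : (fun i => P₁ i k) = P₁.mulVec (Pi.single k 1) := by
      funext i
      simp [Matrix.mulVec, dotProduct, Pi.single_apply, mul_ite, Finset.sum_ite_eq']
    have hsingle₂ : (fun j => P₂ j l) = P₂.mulVec (Pi.single l 1) := by
      funext j
      simp [Matrix.mulVec, dotProduct, Pi.single_apply, mul_ite, Finset.sum_ite_eq']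
    have ha : δ₁ᵀ.mulVec (fun i => P₁ i k) = 0 := by rw [hsingle₁]; exact hP₁ker _
    have hb : δ₂ᵀ.mulVec (fun j => P₂ j l) = 0 := by rw [hsingle₂]; exact hP₂ker _
    have hkey := key_pair M M' hM' δ₁ δ₂ h₁ h₂ hZ₁ hZ₂ ψ hcyc hred
      (fun i => P₁ i k) (fun j => P₂ j l) ha hb
    have expand : (P₁ᵀ * ψ * P₂) k l =
        (fun i => P₁ i k) ⬝ᵥ ψ.mulVec (fun j => P₂ j l) := by
      simp only [Matrix.mul_apply, Matrix.transpose_apply, dotProduct, Matrix.mulVec,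
        Finset.sum_mul, Finset.mul_sum]
      rw [Finset.sum_comm]
      exact Finset.sum_congr rfl fun i _ => Finset.sum_congr rfl fun j _ => by ring
    rw [expand, hkey]
    simp
  calc Matrix.trace (χ₁ᵀ * ψ) = Matrix.trace ((P₁ * χ₁)ᵀ * ψ) := by rw [h8]
    _ = Matrix.trace (χ₁ᵀ * (P₁ᵀ * ψ)) := TL _ _ _
    _ = Matrix.trace ((χ₁ * P₂ᵀ)ᵀ * (P₁ᵀ * ψ)) := by rw [h9]
    _ = Matrix.trace (χ₁ᵀ * ((P₁ᵀ * ψ) * P₂ᵀᵀ)) := TR _ _ _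
    _ = 0 := by rw [Matrix.transpose_transpose, h10, mul_zero, Matrix.trace_zero]

end Aux

/-- If both input codes have distance at least `M − M' + 1`, then every cycle of the
product boundary map whose reduced matrix (top-left `M'×M'` submatrix) vanishes is a
boundary. -/
theorem vanishing_reduced_matrix_implies_trivial (M M' : ℕ) (hM' : M' ≤ M)
    (δ₁ δ₂ : Matrix (Fin M) (Fin M) (ZMod 2))
    (h₁ : δ₁ * δ₁ = 0) (h₂ : δ₂ * δ₂ = 0)
    (hZ₁ : ∀ v : Fin M → ZMod 2, δ₁.mulVec v = 0 →
      (¬ ∃ x : Fin M → ZMod 2, δ₁.mulVec x = v) → M - M' + 1 ≤ wt v)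
    (hX₁ : ∀ v : Fin M → ZMod 2, δ₁ᵀ.mulVec v = 0 →
      (¬ ∃ x : Fin M → ZMod 2, δ₁ᵀ.mulVec x = v) → M - M' + 1 ≤ wt v)
    (hZ₂ : ∀ v : Fin M → ZMod 2, δ₂.mulVec v = 0 →
      (¬ ∃ x : Fin M → ZMod 2, δ₂.mulVec x = v) → M - M' + 1 ≤ wt v)
    (hX₂ : ∀ v : Fin M → ZMod 2, δ₂ᵀ.mulVec v = 0 →
      (¬ ∃ x : Fin M → ZMod 2, δ₂ᵀ.mulVec x = v) → M - M' + 1 ≤ wt v) :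
    ∀ h : Matrix (Fin M) (Fin M) (ZMod 2), δ₁ * h + h * δ₂ᵀ = 0 →
      (∀ i j : Fin M, (i : ℕ) < M' → (j : ℕ) < M' → h i j = 0) →
      ∃ φ : Matrix (Fin M) (Fin M) (ZMod 2), h = δ₁ * φ + φ * δ₂ᵀ := by
  exact main_thm M M' hM' δ₁ δ₂ h₁ h₂ hZ₁ hZ₂
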